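/- Fix ψ > 0 and a, b, c > 0 with a + b + c = 1, and let (φ, ρ) ∈ 𝒟 be the critical point of f + h (with f, h, 𝒟 as above). Then ρ = σ(z) and φ = ν(z), where z = ψ/φ satisfies ζ(z) = ψ; here σ(z) = (√(z²+z+1)−1)/z, ν(z) = ζ(z)/z, and ζ is as in the definition of the arctic curve. -/

import Mathlib

open Real

/-- The entropy-type function `h(x,y)` on the domain `𝒟`. -/
noncomputable def hFn (a b c x y : ℝ) : ℝ :=
  (2 - y) * Real.log (2 - y) - (1 - y) * Real.log (1 - y) + (1 + y) * Real.log (1 + y) -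
    y * Real.log y + (c + x - y) * Real.log (c + x - y) - c * Real.log c -
    (x - y) * Real.log (x - y) + (a + b + y - x) * Real.log (a + b + y - x) -
    a * Real.log a - (b + y - x) * Real.log (b + y - x)

/-- The function `f(x) = (ψ+x)log(ψ+x) − ψ log ψ − x log x`. -/
noncomputable def fFn (ψ x : ℝ) : ℝ :=
  (ψ + x) * Real.log (ψ + x) - ψ * Real.log ψ - x * Real.log x

/-- `g = f + h`. -/
noncomputable def gFn (a b c ψ x y : ℝ) : ℝ := fFn ψ x + hFn a b c x y

/-- Membership in the domain `𝒟 = {(x,y) : 0 < x, 0 < y, x < 1+b, x−b < y < min(x,1)}`. -/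
def memD (b x y : ℝ) : Prop :=
  0 < x ∧ 0 < y ∧ x < 1 + b ∧ x - b < y ∧ y < x ∧ y < 1

/-- The Hessian matrix of `g = f + h` at `(x, y)`, with entries given by iterated `deriv`s. -/
noncomputable def hessG (a b c ψ x y : ℝ) : Matrix (Fin 2) (Fin 2) ℝ :=
  !![deriv (fun t => deriv (fun s => gFn a b c ψ s y) t) x,
     deriv (fun t => deriv (fun s => gFn a b c ψ s t) x) y;
     deriv (fun t => deriv (fun s => gFn a b c ψ t s) y) x,
     deriv (fun t => deriv (fun s => gFn a b c ψ x s) t) y]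

/-- The function `ζ(z)` from the arctic-curve parametrization. -/
noncomputable def zeta (a b c z : ℝ) : ℝ :=
  Real.sqrt (z ^ 2 + z + 1) + Real.sqrt ((z * b + z * c + a + c) ^ 2 - 4 * a * b * z) / 2 +
    ((b - c) * z - a - c) / 2 - 1

/-- `σ(z) = (√(z²+z+1) − 1)/z`. -/
noncomputable def sigmaFn (z : ℝ) : ℝ := (Real.sqrt (z ^ 2 + z + 1) - 1) / z

/-- `ν(z) = ζ(z)/z`. -/
noncomputable def nuFn (a b c z : ℝ) : ℝ := zeta a b c z / z

lemma hda_add (k x : ℝ) (h : k + x ≠ 0) :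
    HasDerivAt (fun t => (k + t) * Real.log (k + t)) (Real.log (k + x) + 1) x := by
  have h1 : HasDerivAt (fun t : ℝ => k + t) 1 x := (hasDerivAt_id x).const_add k
  have := (Real.hasDerivAt_mul_log h).comp x h1
  simpa [Function.comp_def] using this

lemma hda_sub (k x : ℝ) (h : k - x ≠ 0) :
    HasDerivAt (fun t => (k - t) * Real.log (k - t)) (-(Real.log (k - x) + 1)) x := by
  have h1 : HasDerivAt (fun t : ℝ => k - t) (-1) x := (hasDerivAt_id x).const_sub k
  have := (Real.hasDerivAt_mul_log h).comp x h1
  simpa [Function.comp_def] using this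

lemma hda_sub' (m x : ℝ) (h : x - m ≠ 0) :
    HasDerivAt (fun t => (t - m) * Real.log (t - m)) (Real.log (x - m) + 1) x := by
  have h1 : HasDerivAt (fun t : ℝ => t - m) 1 x := (hasDerivAt_id x).sub_const m
  have := (Real.hasDerivAt_mul_log h).comp x h1
  simpa [Function.comp_def] using this

lemma hda_addsub (k m x : ℝ) (h : k + x - m ≠ 0) :
    HasDerivAt (fun t => (k + t - m) * Real.log (k + t - m)) (Real.log (k + x - m) + 1) x := by
  have h1 : HasDerivAt (fun t : ℝ => k + t - m) 1 x := ((hasDerivAt_id x).const_add k).sub_const m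
  have := (Real.hasDerivAt_mul_log h).comp x h1
  simpa [Function.comp_def] using this

set_option maxHeartbeats 1000000

/-- If `(φ, ρ) ∈ 𝒟` is a critical point of `f + h`, then setting `z = ψ/φ` one has
`ζ(z) = ψ`, `ρ = σ(z)` and `φ = ν(z)`. -/
theorem critical_point_identification (a b c ψ : ℝ) (ha : 0 < a) (hb : 0 < b) (hc : 0 < c)
    (habc : a + b + c = 1) (hψ : 0 < ψ) (φ ρ : ℝ) (hmem : memD b φ ρ)
    (hcx : deriv (fun t => gFn a b c ψ t ρ) φ = 0)
    (hcy : deriv (fun t => gFn a b c ψ φ t) ρ = 0) :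
    zeta a b c (ψ / φ) = ψ ∧ ρ = sigmaFn (ψ / φ) ∧ φ = nuFn a b c (ψ / φ) := by
  simp only [gFn, fFn, hFn] at hcx hcy
  obtain ⟨hφ0, hρ0, hφ1b, hρlb, hρφ, hρ1⟩ := hmem
  have P1 : (0:ℝ) < ψ + φ := by linarith
  have Pcr : (0:ℝ) < c + φ - ρ := by linarith
  have Pfr : (0:ℝ) < φ - ρ := by linarith
  have Pbf : (0:ℝ) < b + ρ - φ := by linarith
  have Pab : (0:ℝ) < a + b + ρ - φ := by linarith
  have P2r : (0:ℝ) < 2 - ρ := by linarith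
  have P1m : (0:ℝ) < 1 - ρ := by linarith
  have P1p : (0:ℝ) < 1 + ρ := by linarith
  -- x-direction derivative
  have F1 := ((hda_add ψ φ P1.ne').sub_const (ψ * Real.log ψ)).sub
    (Real.hasDerivAt_mul_log hφ0.ne')
  have Hp1 := (((((hda_addsub c ρ φ Pcr.ne').const_add
      ((2 - ρ) * Real.log (2 - ρ) - (1 - ρ) * Real.log (1 - ρ) + (1 + ρ) * Real.log (1 + ρ) -
        ρ * Real.log ρ)).sub_const (c * Real.log c)).sub
      (hda_sub' ρ φ Pfr.ne')).add (hda_sub (a + b + ρ) φ Pab.ne')).sub_const (a * Real.log a)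
  have H1 := F1.add (Hp1.sub (hda_sub (b + ρ) φ Pbf.ne'))
  have hDx := H1.deriv.symm.trans hcx
  -- y-direction derivative
  have Hp2 := ((((((((hda_sub 2 ρ P2r.ne').sub (hda_sub 1 ρ P1m.ne')).add
      (hda_add 1 ρ P1p.ne')).sub (Real.hasDerivAt_mul_log hρ0.ne')).add
      (hda_sub (c + φ) ρ Pcr.ne')).sub_const (c * Real.log c)).sub
      (hda_sub φ ρ Pfr.ne')).add (hda_addsub (a + b) φ ρ Pab.ne')).sub_const (a * Real.log a)
  have H2 := (Hp2.sub (hda_addsub b φ ρ Pbf.ne')).const_add (fFn ψ φ)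
  have hDy := H2.deriv.symm.trans hcy
  -- exponentiate
  have E1 : (ψ + φ) * ((c + φ - ρ) * (b + ρ - φ)) = φ * ((φ - ρ) * (a + b + ρ - φ)) := by
    have hL : Real.log ((ψ + φ) * ((c + φ - ρ) * (b + ρ - φ))) =
        Real.log (φ * ((φ - ρ) * (a + b + ρ - φ))) := by
      rw [Real.log_mul P1.ne' (mul_ne_zero Pcr.ne' Pbf.ne'), Real.log_mul Pcr.ne' Pbf.ne',
          Real.log_mul hφ0.ne' (mul_ne_zero Pfr.ne' Pab.ne'), Real.log_mul Pfr.ne' Pab.ne']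
      linarith [hDx]
    have h := congrArg Real.exp hL
    rwa [Real.exp_log (mul_pos P1 (mul_pos Pcr Pbf)),
        Real.exp_log (mul_pos hφ0 (mul_pos Pfr Pab))] at h
  have E2 : (1 - ρ) * ((1 + ρ) * ((φ - ρ) * (a + b + ρ - φ))) =
      (2 - ρ) * (ρ * ((c + φ - ρ) * (b + ρ - φ))) := by
    have hL : Real.log ((1 - ρ) * ((1 + ρ) * ((φ - ρ) * (a + b + ρ - φ)))) =
        Real.log ((2 - ρ) * (ρ * ((c + φ - ρ) * (b + ρ - φ)))) := by
      rw [Real.log_mul P1m.ne' (mul_ne_zero P1p.ne' (mul_ne_zero Pfr.ne' Pab.ne')),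
          Real.log_mul P1p.ne' (mul_ne_zero Pfr.ne' Pab.ne'), Real.log_mul Pfr.ne' Pab.ne',
          Real.log_mul P2r.ne' (mul_ne_zero hρ0.ne' (mul_ne_zero Pcr.ne' Pbf.ne')),
          Real.log_mul hρ0.ne' (mul_ne_zero Pcr.ne' Pbf.ne'), Real.log_mul Pcr.ne' Pbf.ne']
      linarith [hDy]
    have h := congrArg Real.exp hL
    rwa [Real.exp_log (mul_pos P1m (mul_pos P1p (mul_pos Pfr Pab))),
        Real.exp_log (mul_pos P2r (mul_pos hρ0 (mul_pos Pcr Pbf)))] at h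
  -- algebra
  set z := ψ / φ with hz
  have hz0 : 0 < z := div_pos hψ hφ0
  have hzφ : z * φ = ψ := div_mul_cancel₀ ψ hφ0.ne'
  have key : ((1 - ρ) * (1 + ρ) * (ψ + φ) - (2 - ρ) * ρ * φ) * ((c + φ - ρ) * (b + ρ - φ)) = 0 := by
    linear_combination (1 - ρ) * (1 + ρ) * E1 + φ * E2
  have EA : (1 - ρ) * (1 + ρ) * (ψ + φ) - (2 - ρ) * ρ * φ = 0 :=
    (mul_eq_zero.mp key).resolve_right (mul_pos Pcr Pbf).ne'
  have hq : z * ρ ^ 2 + 2 * ρ - 1 - z = 0 := by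
    have h0 : φ * (z * ρ ^ 2 + 2 * ρ - 1 - z) = 0 := by
      linear_combination -EA + (ρ ^ 2 - 1) * hzφ
    exact (mul_eq_zero.mp h0).resolve_left hφ0.ne'
  have hqu : z * (φ - ρ) ^ 2 - ((b - c) * z - a - c) * (φ - ρ) - (1 + z) * b * c = 0 := by
    have h0 : φ * (z * (φ - ρ) ^ 2 - ((b - c) * z - a - c) * (φ - ρ) - (1 + z) * b * c) = 0 := by
      linear_combination -E1 - ((c + φ - ρ) * (b + ρ - φ)) * hzφ
    exact (mul_eq_zero.mp h0).resolve_left hφ0.ne'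
  have hsq2 : (2 * z * (φ - ρ) - ((b - c) * z - a - c)) ^ 2 =
      (z * b + z * c + a + c) ^ 2 - 4 * a * b * z := by
    linear_combination 4 * z * hqu
  have hWu : (2 * z * (φ - ρ) - ((b - c) * z - a - c)) * (φ - ρ) =
      z * (φ - ρ) ^ 2 + (1 + z) * b * c := by linear_combination hqu
  have hW : 0 < 2 * z * (φ - ρ) - ((b - c) * z - a - c) := by
    have h1 : 0 < z * (φ - ρ) ^ 2 := mul_pos hz0 (pow_pos Pfr 2)
    have h2 : 0 < (1 + z) * b * c := mul_pos (mul_pos (by linarith) hb) hc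
    by_contra h
    push_neg at h
    nlinarith [hWu, Pfr, h1, h2, mul_nonneg (neg_nonneg.mpr h) Pfr.le]
  have hsqrtD : Real.sqrt ((z * b + z * c + a + c) ^ 2 - 4 * a * b * z) =
      2 * z * (φ - ρ) - ((b - c) * z - a - c) := by
    rw [← hsq2, Real.sqrt_sq hW.le]
  have hsqrt1 : Real.sqrt (z ^ 2 + z + 1) = z * ρ + 1 := by
    have hs : (z * ρ + 1) ^ 2 = z ^ 2 + z + 1 := by linear_combination z * hq
    rw [← hs, Real.sqrt_sq (by nlinarith [mul_pos hz0 hρ0])]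
  have hzeta : zeta a b c z = ψ := by
    unfold zeta
    rw [hsqrt1, hsqrtD]
    linear_combination hzφ
  refine ⟨hzeta, ?_, ?_⟩
  · unfold sigmaFn
    rw [hsqrt1]
    field_simp
    ring
  · unfold nuFn
    rw [hzeta, hz]
    field_simp
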